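/- arXiv:2509.08832 — 4 statements merged into one kernel-verified Lean document; each statement's English description precedes it below -/
import Mathlib

section
/- If ρ : L^∞(P) → ℝ is a risk measure, then its convex conjugate ρ*(Y) = sup_{X ∈ L^∞} (E[XY] - ρ(X)) is finite only if Y is the density of an absolutely continuous probability measure; that is, if ρ*(Y) < ∞ then Y ≥ 0 a.s. and E[Y] = 1. -/
open MeasureTheory
open scoped ENNReal
noncomputable section

/-- if the convex conjugate of a risk measure is finite at `Y ∈ L¹`,
then `Y ≥ 0` a.s. and `E[Y] = 1`, i.e. `Y` is the density of an absolutely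
continuous probability measure. -/
theorem conjugate_finite_implies_density
    {Ω : Type*} [MeasurableSpace Ω] (P : Measure Ω) [IsProbabilityMeasure P]
    (ρ : Lp ℝ ⊤ P → ℝ)
    (hmono : ∀ X Y : Lp ℝ ⊤ P, X ≤ Y → ρ X ≤ ρ Y)
    (hcash : ∀ (X : Lp ℝ ⊤ P) (a : ℝ), ρ (X + Lp.const ⊤ P a) = ρ X + a)
    (Y : Lp ℝ 1 P)
    (hfin : (⨆ X : Lp ℝ ⊤ P, ((∫ ω, X ω * Y ω ∂P - ρ X : ℝ) : EReal)) < ⊤) :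
    (∀ᵐ ω ∂P, 0 ≤ Y ω) ∧ ∫ ω, Y ω ∂P = 1 := by
  classical
  -- extract a real bound
  obtain ⟨M, hM⟩ : ∃ M : ℝ, ∀ X : Lp ℝ ⊤ P, ∫ ω, X ω * Y ω ∂P - ρ X ≤ M := by
    set S := ⨆ X : Lp ℝ ⊤ P, ((∫ ω, X ω * Y ω ∂P - ρ X : ℝ) : EReal) with hS
    refine ⟨S.toReal, fun X => ?_⟩
    have h1 : ((∫ ω, X ω * Y ω ∂P - ρ X : ℝ) : EReal) ≤ S :=
      le_iSup (fun X : Lp ℝ ⊤ P => ((∫ ω, X ω * Y ω ∂P - ρ X : ℝ) : EReal)) X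
    have hbot : S ≠ ⊥ := by
      intro h
      rw [h, le_bot_iff] at h1
      exact EReal.coe_ne_bot _ h1
    have h2 := EReal.coe_toReal (ne_of_lt hfin) hbot
    rw [← h2] at h1
    exact_mod_cast h1
  -- zero element integral
  have hzero : ∫ ω, (0 : Lp ℝ ⊤ P) ω * Y ω ∂P = 0 := by
    have heq : (fun ω => (0 : Lp ℝ ⊤ P) ω * (Y : Ω → ℝ) ω) =ᵐ[P] fun _ => (0:ℝ) := by
      filter_upwards [Lp.coeFn_zero ℝ ⊤ P] with ω hω
      simp [hω]
    rw [integral_congr_ae heq]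
    simp
  have hMρ0 : -ρ 0 ≤ M := by simpa [hzero] using hM 0
  -- part 2 : E[Y] = 1
  have hEY : ∫ ω, Y ω ∂P = 1 := by
    have hconst : ∀ c : ℝ, ρ (Lp.const ⊤ P c) = ρ 0 + c := by
      intro c
      have := hcash 0 c
      rwa [zero_add] at this
    have hIconst : ∀ c : ℝ, ∫ ω, (Lp.const ⊤ P c) ω * Y ω ∂P = c * ∫ ω, Y ω ∂P := by
      intro c
      have heq : (fun ω => (Lp.const ⊤ P c) ω * (Y : Ω → ℝ) ω)
          =ᵐ[P] fun ω => c * (Y : Ω → ℝ) ω := by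
        filter_upwards [Lp.coeFn_const (p := ⊤) (μ := P) (c := c)] with ω hω
        simp [hω, Function.const]
      rw [integral_congr_ae heq, integral_const_mul]
    have key : ∀ c : ℝ, c * (∫ ω, Y ω ∂P - 1) ≤ M + ρ 0 := by
      intro c
      have := hM (Lp.const ⊤ P c)
      rw [hIconst c, hconst c] at this
      nlinarith [this]
    by_contra h
    have hd : (∫ ω, Y ω ∂P - 1) ≠ 0 := sub_ne_zero.mpr h
    have := key ((M + ρ 0 + 1) / (∫ ω, Y ω ∂P - 1))
    rw [div_mul_cancel₀ _ hd] at this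
    linarith
  refine ⟨?_, hEY⟩
  -- part 1 : Y ≥ 0 a.e.
  have hYsm : StronglyMeasurable (Y : Ω → ℝ) := Lp.stronglyMeasurable Y
  set A : Set Ω := {ω | (Y : Ω → ℝ) ω < 0} with hAdef
  have hA : MeasurableSet A := measurableSet_lt hYsm.measurable measurable_const
  rw [ae_iff]
  show P {ω | ¬ 0 ≤ (Y : Ω → ℝ) ω} = 0
  have hset : {ω | ¬ 0 ≤ (Y : Ω → ℝ) ω} = A := by
    ext ω; simp [hAdef, not_le]
  rw [hset]
  by_contra hA0
  -- ∫_A Y < 0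
  have hIneg : 0 < ∫ ω in A, (-(Y : Ω → ℝ) ω) ∂P := by
    rw [setIntegral_pos_iff_support_of_nonneg_ae]
    · have hsub : A ⊆ Function.support fun ω => -(Y : Ω → ℝ) ω := by
        intro ω hω
        simp only [Function.mem_support, neg_ne_zero]
        exact ne_of_lt hω
      rw [Set.inter_eq_right.mpr hsub]
      exact lt_of_le_of_ne zero_le (Ne.symm hA0)
    · exact (ae_restrict_iff' hA).2 (ae_of_all _ fun ω hω => le_of_lt (neg_pos.2 hω))
    · exact (L1.integrable_coeFn Y).neg.integrableOn
  set I : ℝ := ∫ ω in A, (Y : Ω → ℝ) ω ∂P with hIdef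
  have hI : 0 < -I := by
    rw [hIdef, ← integral_neg]
    exact hIneg
  set c : ℝ := (M + ρ 0 + 1) / (-I) with hcdef
  have hc : 0 < c := div_pos (by linarith) hI
  set X : Lp ℝ ⊤ P :=
    (memLp_indicator_const ⊤ hA (-c) (Or.inr (measure_ne_top P A))).toLp _ with hXdef
  have hXcoe : (X : Ω → ℝ) =ᵐ[P] A.indicator fun _ => -c :=
    MemLp.coeFn_toLp _
  have hXle : X ≤ 0 := by
    rw [← Lp.coeFn_le]
    filter_upwards [hXcoe, Lp.coeFn_zero ℝ ⊤ P] with ω h1 h2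
    rw [h1, h2]
    by_cases hω : ω ∈ A <;> simp [hω, le_of_lt hc]
  have hρX : ρ X ≤ ρ 0 := hmono X 0 hXle
  have hIX : ∫ ω, X ω * Y ω ∂P = -c * I := by
    have heq : (fun ω => X ω * (Y : Ω → ℝ) ω)
        =ᵐ[P] A.indicator fun ω => -c * (Y : Ω → ℝ) ω := by
      filter_upwards [hXcoe] with ω h1
      rw [h1]
      by_cases hω : ω ∈ A <;> simp [hω]
    rw [integral_congr_ae heq, integral_indicator hA, integral_const_mul]
  have := hM X
  rw [hIX] at this
  have hcancel : -c * I = M + ρ 0 + 1 := by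
    have h2 : -c * I = c * (-I) := by ring
    rw [h2, hcdef, div_mul_cancel₀ _ (ne_of_gt hI)]
  rw [hcancel] at this
  linarith
end
end

section
/- For β ∈ [0,1), there do not exist a probability measure Q ≪ P and r ∈ ℝ such that VaR_β(X) ≥ E^Q[X] − r for all X ∈ L^∞(P), provided β ≥ sup over P-atoms C of P(C) and P has an event of positive measure at most β. -/
open MeasureTheory
noncomputable section

lemma exists_Qpos_Psmall {Ω : Type*} [MeasurableSpace Ω] (P Q : Measure Ω)
    [IsProbabilityMeasure P] [IsProbabilityMeasure Q]
    {β : ℝ} (hβ0 : 0 < β)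
    (hatoms : ∀ C : Set Ω, (MeasurableSet C ∧ 0 < P C ∧
      ∀ B ⊆ C, MeasurableSet B → P B = 0 ∨ P B = P C) → (P C).toReal ≤ β) :
    ∃ C : Set Ω, MeasurableSet C ∧ Q C ≠ 0 ∧ (P C).toReal ≤ β := by
  by_contra hcon
  push_neg at hcon
  set T : Set ℝ := {x | ∃ A : Set Ω, MeasurableSet A ∧ Q A ≠ 0 ∧ (P A).toReal = x} with hT
  have hTne : T.Nonempty := ⟨(P Set.univ).toReal, Set.univ, MeasurableSet.univ, by simp, rfl⟩
  have hTlb : ∀ x ∈ T, β ≤ x := by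
    rintro x ⟨A, hA, hQA, rfl⟩
    exact (hcon A hA hQA).le
  have hTbdd : BddBelow T := ⟨β, hTlb⟩
  set t : ℝ := sInf T with ht
  have htβ : β ≤ t := le_csInf hTne hTlb
  have ht0 : 0 < t := lt_of_lt_of_le hβ0 htβ
  set ε : ℝ := t / 4 with hε
  have hε0 : 0 < ε := by positivity
  have hεt : 4 * ε = t := by rw [hε]; ring
  have key2 : ∀ S : Set Ω, MeasurableSet S → Q S ≠ 0 → t ≤ (P S).toReal := by
    intro S hS hQS
    exact csInf_le hTbdd ⟨S, hS, hQS, rfl⟩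
  obtain ⟨x, hxT, hxlt⟩ := exists_lt_of_csInf_lt hTne (show sInf T < t + ε by linarith)
  obtain ⟨B, hB, hQB, rfl⟩ := hxT
  have hpBt : t ≤ (P B).toReal := key2 B hB hQB
  have hfin : ∀ A : Set Ω, P A ≠ ⊤ := fun A => measure_ne_top P A
  have hsplit : ∀ S T' : Set Ω, MeasurableSet S → MeasurableSet T' → S ⊆ T' →
      (P S).toReal + (P (T' \ S)).toReal = (P T').toReal := by
    intro S T' hS hT' hST
    rw [← ENNReal.toReal_add (hfin S) (hfin _),
      ← measure_union Set.disjoint_sdiff_right (hT'.diff hS), Set.union_diff_cancel hST]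
  have hQzero : ∀ S T' : Set Ω, S ⊆ T' → Q (T' \ S) = 0 → Q S = 0 → Q T' = 0 := by
    intro S T' hST h1 h2
    have h3 : Q T' ≤ Q (T' \ S) + Q S := by
      conv_lhs => rw [← Set.diff_union_of_subset hST]
      exact measure_union_le _ _
    have h4 : Q T' ≤ 0 := by simpa [h1, h2] using h3
    exact le_antisymm h4 (zero_le)
  have key1 : ∀ S : Set Ω, MeasurableSet S → S ⊆ B → Q S = 0 → (P S).toReal < ε := by
    intro S hS hSB hQS
    have hQd : Q (B \ S) ≠ 0 := fun h0 => hQB (hQzero S B hSB h0 hQS)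
    have h1 : t ≤ (P (B \ S)).toReal := key2 _ (hB.diff hS) hQd
    have h2 := hsplit S B hS hB hSB
    linarith
  set M : Set ℝ := {x | ∃ S : Set Ω, MeasurableSet S ∧ S ⊆ B ∧ Q S = 0 ∧ (P S).toReal = x}
    with hM
  have hMne : M.Nonempty := ⟨0, ∅, MeasurableSet.empty, Set.empty_subset _, by simp, by simp⟩
  have hMub : ∀ x ∈ M, x ≤ ε := by
    rintro x ⟨S, hS, hSB, hQS, rfl⟩
    exact (key1 S hS hSB hQS).le
  have hMbdd : BddAbove M := ⟨ε, hMub⟩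
  set m : ℝ := sSup M with hm
  have hm0 : 0 ≤ m := le_csSup hMbdd ⟨∅, MeasurableSet.empty, Set.empty_subset _, by simp, by simp⟩
  have hseq : ∀ n : ℕ, ∃ S : Set Ω, MeasurableSet S ∧ S ⊆ B ∧ Q S = 0 ∧
      m - 1 / (n + 1 : ℝ) < (P S).toReal := by
    intro n
    have h1 : m - 1 / (n + 1 : ℝ) < sSup M := by
      have : (0:ℝ) < 1 / (n + 1 : ℝ) := by positivity
      linarith
    obtain ⟨x, ⟨S, hS, hSB, hQS, rfl⟩, hlt⟩ := exists_lt_of_lt_csSup hMne h1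
    exact ⟨S, hS, hSB, hQS, hlt⟩
  choose S hSmeas hSsub hSnull hSbig using hseq
  set U : Set Ω := ⋃ n, S n with hU
  have hUmeas : MeasurableSet U := MeasurableSet.iUnion hSmeas
  have hUsub : U ⊆ B := Set.iUnion_subset hSsub
  have hUnull : Q U = 0 := measure_iUnion_null hSnull
  have hUsmall : (P U).toReal < ε := key1 U hUmeas hUsub hUnull
  have hUlem : (P U).toReal ≤ m := le_csSup hMbdd ⟨U, hUmeas, hUsub, hUnull, rfl⟩
  have hUge : m ≤ (P U).toReal := by
    by_contra hlt
    push_neg at hlt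
    obtain ⟨n, hn⟩ := exists_nat_one_div_lt (show (0:ℝ) < m - (P U).toReal by linarith)
    have h1 : (P (S n)).toReal ≤ (P U).toReal :=
      (ENNReal.toReal_le_toReal (hfin _) (hfin _)).mpr (measure_mono (Set.subset_iUnion S n))
    have := hSbig n
    linarith
  have hUm : (P U).toReal = m := le_antisymm hUlem hUge
  set C : Set Ω := B \ U with hC
  have hCmeas : MeasurableSet C := hB.diff hUmeas
  have hQC : Q C ≠ 0 := fun h0 => hQB (hQzero U B hUsub h0 hUnull)
  have hCsplit := hsplit U B hUmeas hB hUsub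
  have hCval : (P C).toReal = (P B).toReal - m := by rw [← hUm]; linarith
  have hmε : m < ε := hUm ▸ hUsmall
  have hCpos : 0 < (P C).toReal := by linarith
  have hCne : 0 < P C := by
    rcases eq_or_lt_of_le (zero_le : 0 ≤ P C) with h0 | h0
    · rw [← h0] at hCpos; simp at hCpos
    · exact h0
  have hnullcase : ∀ T' : Set Ω, MeasurableSet T' → T' ⊆ C → Q T' = 0 → P T' = 0 := by
    intro T' hT' hT'C hQT'
    have hdisj : Disjoint U T' := Set.disjoint_sdiff_right.mono_right hT'C
    have hWsub : U ∪ T' ⊆ B := Set.union_subset hUsub (hT'C.trans Set.diff_subset)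
    have hWnull : Q (U ∪ T') = 0 := by
      have h3 : Q (U ∪ T') ≤ Q U + Q T' := measure_union_le _ _
      have h4 : Q (U ∪ T') ≤ 0 := by simpa [hUnull, hQT'] using h3
      exact le_antisymm h4 (zero_le)
    have hWM : (P (U ∪ T')).toReal ≤ m :=
      le_csSup hMbdd ⟨U ∪ T', hUmeas.union hT', hWsub, hWnull, rfl⟩
    have hWadd : (P (U ∪ T')).toReal = (P U).toReal + (P T').toReal := by
      rw [measure_union hdisj hT', ENNReal.toReal_add (hfin _) (hfin _)]
    have h0 : (P T').toReal = 0 := le_antisymm (by linarith) ENNReal.toReal_nonneg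
    rcases (ENNReal.toReal_eq_zero_iff _).mp h0 with h | h
    · exact h
    · exact absurd h (hfin _)
  have hatom : MeasurableSet C ∧ 0 < P C ∧
      ∀ B' ⊆ C, MeasurableSet B' → P B' = 0 ∨ P B' = P C := by
    refine ⟨hCmeas, hCne, fun T' hT'C hT' => ?_⟩
    by_cases hQT' : Q T' = 0
    · exact Or.inl (hnullcase T' hT' hT'C hQT')
    · right
      have h1 : t ≤ (P T').toReal := key2 T' hT' hQT'
      have h2 := hsplit T' C hT' hCmeas hT'C
      have hQd : Q (C \ T') = 0 := by
        by_contra hQd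
        have := key2 _ (hCmeas.diff hT') hQd
        linarith
      have h3 : P (C \ T') = 0 := hnullcase _ (hCmeas.diff hT') Set.diff_subset hQd
      have h4 : (P (C \ T')).toReal = 0 := by rw [h3]; simp
      have h5 : (P T').toReal = (P C).toReal := by linarith
      exact (ENNReal.toReal_eq_toReal_iff' (hfin _) (hfin _)).mp h5
  have := hatoms C hatom
  exact absurd this (not_le.mpr (hcon C hCmeas hQC))

/-- Value at risk at level `β`. -/
def VaR {Ω : Type*} [MeasurableSpace Ω] (P : Measure Ω) [IsProbabilityMeasure P]
    (β : ℝ) (X : Lp ℝ ⊤ P) : ℝ :=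
  sInf {x : ℝ | 1 - β ≤ (P {ω | X ω ≤ x}).toReal}

/-- A `P`-atom. -/
def IsPAtom {Ω : Type*} [MeasurableSpace Ω] (P : Measure Ω) (C : Set Ω) : Prop :=
  MeasurableSet C ∧ 0 < P C ∧ ∀ B ⊆ C, MeasurableSet B → P B = 0 ∨ P B = P C

/-- if every `P`-atom has probability at most `β` and there is an event of
positive probability at most `β`, then no affine minorant `X ↦ E^Q[X] - r` with
`Q ≪ P` a probability measure lies below `VaR_β`. -/
theorem VaR_no_affine_minorant
    {Ω : Type*} [MeasurableSpace Ω] (P : Measure Ω) [IsProbabilityMeasure P]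
    (β : ℝ) (hβ : β ∈ Set.Ico (0 : ℝ) 1)
    (hatoms : ∀ C : Set Ω, IsPAtom P C → (P C).toReal ≤ β)
    (hev : ∃ D : Set Ω, MeasurableSet D ∧ 0 < P D ∧ (P D).toReal ≤ β) :
    ¬ ∃ (Q : Measure Ω) (r : ℝ), IsProbabilityMeasure Q ∧ Q ≪ P ∧
      ∀ X : Lp ℝ ⊤ P, ∫ ω, X ω ∂Q - r ≤ VaR P β X := by
  rintro ⟨Q, r, hQprob, hQP, hmin⟩
  haveI := hQprob
  obtain ⟨D, hD, hDpos, hDβ⟩ := hev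
  have hβ0 : 0 < β := by
    have : 0 < (P D).toReal := ENNReal.toReal_pos (ne_of_gt hDpos) (measure_ne_top P D)
    linarith
  obtain ⟨C, hC, hQC, hCβ⟩ := exists_Qpos_Psmall P Q hβ0 (fun C h => hatoms C h)
  set q : ℝ := (Q C).toReal with hq
  have hq0 : 0 < q := ENNReal.toReal_pos hQC (measure_ne_top Q C)
  set K : ℝ := max 1 ((r + 1) / q) with hK
  have hK1 : (1:ℝ) ≤ K := le_max_left _ _
  have hK0 : 0 < K := lt_of_lt_of_le one_pos hK1
  set f : Ω → ℝ := C.indicator (fun _ => K) with hf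
  have hfbd : ∀ ω, ‖f ω‖ ≤ K := by
    intro ω
    by_cases h : ω ∈ C <;> simp [hf, h, abs_of_pos hK0, hK0.le]
  have hmem : MemLp f ⊤ P :=
    memLp_top_of_bound ((measurable_const.indicator hC).aestronglyMeasurable) K
      (Filter.Eventually.of_forall hfbd)
  set X : Lp ℝ ⊤ P := hmem.toLp f with hX
  have hXP : (X : Ω → ℝ) =ᵐ[P] f := MemLp.coeFn_toLp hmem
  have hXQ : (X : Ω → ℝ) =ᵐ[Q] f := hQP.ae_eq hXP
  have hint : ∫ ω, X ω ∂Q = q * K := by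
    rw [integral_congr_ae hXQ, hf, integral_indicator_const K hC]
    simp [hq, smul_eq_mul, Measure.real]
  have hN : P {ω | ¬ (X : Ω → ℝ) ω = f ω} = 0 := by
    exact hXP
  have hVaR : VaR P β X ≤ 0 := by
    have hmem0 : (0:ℝ) ∈ {x : ℝ | 1 - β ≤ (P {ω | X ω ≤ x}).toReal} := by
      have hsub : Cᶜ \ {ω | ¬ (X : Ω → ℝ) ω = f ω} ⊆ {ω | X ω ≤ (0:ℝ)} := by
        intro ω hω
        simp only [Set.mem_diff, Set.mem_compl_iff, Set.mem_setOf_eq, not_not] at hω ⊢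
        rw [hω.2, hf, Set.indicator_of_notMem hω.1]
      have h1 : P Cᶜ ≤ P {ω | X ω ≤ (0:ℝ)} := by
        calc P Cᶜ = P (Cᶜ \ {ω | ¬ (X : Ω → ℝ) ω = f ω}) := (measure_diff_null hN).symm
        _ ≤ P {ω | X ω ≤ (0:ℝ)} := measure_mono hsub
      have h2 : (P C).toReal + (P Cᶜ).toReal = 1 := by
        rw [← ENNReal.toReal_add (measure_ne_top P C) (measure_ne_top P Cᶜ),
          measure_add_measure_compl hC, measure_univ]
        simp
      have h3 : (P Cᶜ).toReal ≤ (P {ω | X ω ≤ (0:ℝ)}).toReal :=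
        (ENNReal.toReal_le_toReal (measure_ne_top P _) (measure_ne_top P _)).mpr h1
      simp only [Set.mem_setOf_eq]
      linarith
    have hbdd : BddBelow {x : ℝ | 1 - β ≤ (P {ω | X ω ≤ x}).toReal} := by
      refine ⟨-1, fun x hx => ?_⟩
      by_contra hxlt
      push_neg at hxlt
      have hsub : {ω | X ω ≤ x} ⊆ {ω | ¬ (X : Ω → ℝ) ω = f ω} := by
        intro ω hω
        simp only [Set.mem_setOf_eq] at hω ⊢
        intro heq
        have : 0 ≤ f ω := by
          by_cases h : ω ∈ C <;> simp [hf, h, hK0.le]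
        rw [heq] at hω
        linarith
      have h1 : P {ω | X ω ≤ x} = 0 := le_antisymm (hN ▸ measure_mono hsub) (zero_le)
      simp only [Set.mem_setOf_eq, h1] at hx
      simp at hx
      rcases hβ with ⟨hβa, hβb⟩
      linarith
    exact csInf_le hbdd hmem0
  have hfinal := hmin X
  rw [hint] at hfinal
  have hKq : r + 1 ≤ q * K := by
    have : (r + 1) / q ≤ K := le_max_right _ _
    calc r + 1 = q * ((r + 1) / q) := by field_simp
    _ ≤ q * K := by nlinarith
  unfold X at hfinal hVaR
  linarith
end
end

section
/- Richter's theorem: Let (A, 𝒜, μ) be a non-atomic finite measure space and F : A → 2^(ℝ^d) a correspondence. Then the Aumann integral ∫_A F(a) μ(da) = { ∫_A f dμ : f an integrable selector of F } is a convex subset of ℝ^d. -/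
open MeasureTheory
open scoped NNReal ENNReal
noncomputable section

namespace RichterProof

local notation "⟪" x ", " y "⟫" => @inner ℝ _ _ x y

variable {A : Type*} [MeasurableSpace A]

lemma exists_disjoint_pos (ν : Measure A) [IsFiniteMeasure ν]
    (hna : ∀ C : Set A, MeasurableSet C → 0 < ν C →
      ∃ B ⊆ C, MeasurableSet B ∧ 0 < ν B ∧ ν B < ν C) :
    ∀ (n : ℕ) (C : Set A), MeasurableSet C → 0 < ν C →
      ∃ E : Fin n → Set A, (∀ j, MeasurableSet (E j) ∧ E j ⊆ C ∧ 0 < ν (E j)) ∧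
        Pairwise (Function.onFun Disjoint E) := by
  intro n
  induction n with
  | zero =>
    exact fun C _ _ => ⟨Fin.elim0, fun j => j.elim0, fun i => i.elim0⟩
  | succ n IH =>
    intro C hC h0
    obtain ⟨B, hBC, hBm, hB0, hBlt⟩ := hna C hC h0
    have hdiff : 0 < ν (C \ B) := by
      rw [measure_diff hBC hBm.nullMeasurableSet (measure_ne_top ν B)]
      exact tsub_pos_of_lt hBlt
    obtain ⟨E', hE', hdisj⟩ := IH (C \ B) (hC.diff hBm) hdiff
    refine ⟨Fin.cons B E', ?_, ?_⟩
    · intro j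
      refine Fin.cases ?_ ?_ j
      · exact ⟨hBm, hBC, hB0⟩
      · intro k
        exact ⟨(hE' k).1, fun a ha => ((hE' k).2.1 ha).1, (hE' k).2.2⟩
    · intro i j hij
      have hBE : ∀ k, Disjoint B (E' k) := fun k =>
        Set.disjoint_of_subset_right (hE' k).2.1 Set.disjoint_sdiff_right
      rcases Fin.eq_zero_or_eq_succ i with hi | ⟨k, hi⟩ <;>
        rcases Fin.eq_zero_or_eq_succ j with hj | ⟨l, hj⟩ <;> subst hi <;> subst hj
      · exact absurd rfl hij
      · simpa [Function.onFun] using hBE l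
      · simpa [Function.onFun] using (hBE k).symm
      · have hkl : k ≠ l := fun h => hij (by rw [h])
        simpa [Function.onFun] using hdisj hkl

lemma exists_null_comb (d : ℕ) (v : Fin (d+1) → (Fin d → ℝ)) :
    ∃ α : Fin (d+1) → ℝ, (∃ j, α j ≠ 0) ∧ ∑ j, α j • v j = 0 := by
  have hnli : ¬ LinearIndependent ℝ v := by
    intro h
    have h1 := h.fintype_card_le_finrank
    simp [Module.finrank_fintype_fun_eq_card] at h1
  rw [Fintype.not_linearIndependent_iff] at hnli
  obtain ⟨g, hg, i, hi⟩ := hnli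
  exact ⟨g, ⟨i, hi⟩, hg⟩


set_option maxHeartbeats 2000000 in
lemma lyapunov_bounded (ν : Measure A) [IsFiniteMeasure ν]
    (hna : ∀ C : Set A, MeasurableSet C → 0 < ν C →
      ∃ B ⊆ C, MeasurableSet B ∧ 0 < ν B ∧ ν B < ν C)
    (d : ℕ) (ψ : A → Fin d → ℝ) (hψ : Measurable ψ) (hb : ∀ a, ‖ψ a‖ ≤ 1)
    (s : ℝ) (hs0 : 0 ≤ s) (hs1 : s ≤ 1) :
    ∃ B, MeasurableSet B ∧ ∀ i, ∫ a in B, ψ a i ∂ν = s * ∫ a, ψ a i ∂ν := by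
  classical
  -- generic helpers
  have hint : ∀ u : Lp ℝ 2 ν, Integrable (⇑u) ν := fun u =>
    memLp_one_iff_integrable.1 ((Lp.memLp u).mono_exponent (by norm_num))
  have hmul : ∀ u v : Lp ℝ 2 ν, Integrable (fun a => u a * v a) ν := fun u v => by
    have := L2.integrable_inner (𝕜 := ℝ) u v
    simpa [RCLike.inner_apply, conj_trivial, mul_comm] using this
  have hinner : ∀ u v : Lp ℝ 2 ν, ⟪u, v⟫ = ∫ a, u a * v a ∂ν := fun u v => by
    rw [L2.inner_def]; simp [RCLike.inner_apply, conj_trivial, mul_comm]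
  have hmem2 : ∀ (u : A → ℝ), Measurable u → ∀ C : ℝ, (∀ a, |u a| ≤ C) → MemLp u 2 ν :=
    fun u hm C hbd => (memLp_top_of_bound hm.aestronglyMeasurable C
      (Filter.Eventually.of_forall hbd)).mono_exponent le_top
  -- coordinates of ψ
  have hψim : ∀ i, Measurable (fun a => ψ a i) := fun i => (measurable_pi_apply i).comp hψ
  have hψib : ∀ i a, |ψ a i| ≤ 1 := fun i a => by
    have h1 := norm_le_pi_norm (ψ a) i
    have h2 := hb a
    rw [Real.norm_eq_abs] at h1
    linarith
  have hψimem : ∀ i, MemLp (fun a => ψ a i) 2 ν := fun i => hmem2 _ (hψim i) 1 (hψib i)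
  have hψiint : ∀ i, Integrable (fun a => ψ a i) ν := fun i =>
    memLp_one_iff_integrable.1 ((hψimem i).mono_exponent (by norm_num))
  set Ψ : Fin d → Lp ℝ 2 ν := fun i => (hψimem i).toLp _ with hΨdef
  have hΨcoe : ∀ i, ⇑(Ψ i) =ᵐ[ν] fun a => ψ a i := fun i => MemLp.coeFn_toLp _
  -- indicator elements
  have hindmem : ∀ E : Set A, MeasurableSet E → MemLp (E.indicator (fun _ => (1:ℝ))) 2 ν :=
    fun E hE => hmem2 _ (measurable_const.indicator hE) 1 (fun a => by
      by_cases h : a ∈ E <;> simp [Set.indicator, h])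
  -- the constant-one element
  have honem : MemLp (fun _ : A => (1:ℝ)) 2 ν := hmem2 _ measurable_const 1 (by simp)
  set uone : Lp ℝ 2 ν := honem.toLp _ with huonedef
  have huonecoe : ⇑uone =ᵐ[ν] fun _ => (1:ℝ) := MemLp.coeFn_toLp _
  -- the constraint set
  set S : Set (WeakDual ℝ (Lp ℝ 2 ν)) :=
    {Λ | (∀ u : Lp ℝ 2 ν, 0 ≤ᵐ[ν] ⇑u → Λ u ∈ Set.Icc (0:ℝ) (∫ a, u a ∂ν)) ∧
      ∀ i : Fin d, Λ (Ψ i) = s * ∫ a, ψ a i ∂ν} with hSdef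
  -- S is nonempty
  have hvalΛ₀ : ∀ u : Lp ℝ 2 ν, (StrongDual.toWeakDual
      (InnerProductSpace.toDual ℝ (Lp ℝ 2 ν) (s • uone))) u = s * ∫ a, u a ∂ν := by
    intro u
    show (InnerProductSpace.toDual ℝ (Lp ℝ 2 ν) (s • uone)) u = _
    rw [InnerProductSpace.toDual_apply_apply, inner_smul_left, hinner, conj_trivial]
    congr 1
    refine integral_congr_ae ?_
    filter_upwards [huonecoe] with a ha
    rw [ha, one_mul]
  have hΛ₀S : StrongDual.toWeakDual
      (InnerProductSpace.toDual ℝ (Lp ℝ 2 ν) (s • uone)) ∈ S := by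
    constructor
    · intro u hu
      rw [hvalΛ₀]
      have h0 : 0 ≤ ∫ a, u a ∂ν := integral_nonneg_of_ae hu
      constructor
      · exact mul_nonneg hs0 h0
      · nlinarith
    · intro i
      rw [hvalΛ₀]
      congr 1
      exact integral_congr_ae (hΨcoe i)
  -- S is closed
  have hclosed : IsClosed S := by
    have h1 : IsClosed {Λ : WeakDual ℝ (Lp ℝ 2 ν) |
        ∀ u : Lp ℝ 2 ν, 0 ≤ᵐ[ν] ⇑u → Λ u ∈ Set.Icc (0:ℝ) (∫ a, u a ∂ν)} := by
      have : {Λ : WeakDual ℝ (Lp ℝ 2 ν) |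
          ∀ u : Lp ℝ 2 ν, 0 ≤ᵐ[ν] ⇑u → Λ u ∈ Set.Icc (0:ℝ) (∫ a, u a ∂ν)} =
          ⋂ (u : Lp ℝ 2 ν) (_ : 0 ≤ᵐ[ν] ⇑u),
            (fun Λ : WeakDual ℝ (Lp ℝ 2 ν) => Λ u) ⁻¹' Set.Icc (0:ℝ) (∫ a, u a ∂ν) := by
        ext Λ; simp [Set.mem_iInter]
      rw [this]
      exact isClosed_iInter fun u => isClosed_iInter fun _ =>
        isClosed_Icc.preimage (WeakDual.eval_continuous u)
    have h2 : IsClosed {Λ : WeakDual ℝ (Lp ℝ 2 ν) | ∀ i : Fin d, Λ (Ψ i) = s * ∫ a, ψ a i ∂ν} := by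
      have : {Λ : WeakDual ℝ (Lp ℝ 2 ν) | ∀ i : Fin d, Λ (Ψ i) = s * ∫ a, ψ a i ∂ν} =
          ⋂ (i : Fin d), (fun Λ : WeakDual ℝ (Lp ℝ 2 ν) => Λ (Ψ i)) ⁻¹' {s * ∫ a, ψ a i ∂ν} := by
        ext Λ; simp [Set.mem_iInter]
      rw [this]
      exact isClosed_iInter fun i =>
        (isClosed_singleton).preimage (WeakDual.eval_continuous (Ψ i))
    have : S = {Λ : WeakDual ℝ (Lp ℝ 2 ν) |
        ∀ u : Lp ℝ 2 ν, 0 ≤ᵐ[ν] ⇑u → Λ u ∈ Set.Icc (0:ℝ) (∫ a, u a ∂ν)} ∩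
        {Λ : WeakDual ℝ (Lp ℝ 2 ν) | ∀ i : Fin d, Λ (Ψ i) = s * ∫ a, ψ a i ∂ν} := rfl
    rw [this]
    exact h1.inter h2
  -- S is norm-bounded, hence weak-star compact
  have hbound : ∀ Λ ∈ S, ∀ u : Lp ℝ 2 ν, |Λ u| ≤ ‖uone‖ * ‖u‖ := by
    intro Λ hΛ u
    set r : Lp ℝ 2 ν := |u| with hrdef
    have hrcoe : ⇑r =ᵐ[ν] fun a => |u a| := Lp.coeFn_abs u
    have hr1 : 0 ≤ᵐ[ν] ⇑(r - u) := by
      filter_upwards [Lp.coeFn_sub r u, hrcoe] with a h1 h2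
      rw [Pi.zero_apply, h1, Pi.sub_apply, h2]
      simp [abs_nonneg, neg_abs_le, sub_nonneg, le_abs_self]
    have hr2 : 0 ≤ᵐ[ν] ⇑(r + u) := by
      filter_upwards [Lp.coeFn_add r u, hrcoe] with a h1 h2
      rw [Pi.zero_apply, h1, Pi.add_apply, h2]
      have := neg_abs_le (u a); linarith
    have e1 := hΛ.1 (r - u) hr1
    have e2 := hΛ.1 (r + u) hr2
    rw [map_sub, Set.mem_Icc] at e1
    rw [map_add, Set.mem_Icc] at e2
    have e3 := hΛ.1 r (by filter_upwards [hrcoe] with a ha; rw [Pi.zero_apply, ha]; positivity)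
    rw [Set.mem_Icc] at e3
    have e4 : ∫ a, r a ∂ν ≤ ‖uone‖ * ‖u‖ := by
      have : ∫ a, r a ∂ν = ⟪r, uone⟫ := by
        rw [hinner]
        refine integral_congr_ae ?_
        filter_upwards [huonecoe] with a ha
        rw [ha, mul_one]
      rw [this]
      calc ⟪r, uone⟫ ≤ ‖r‖ * ‖uone‖ := real_inner_le_norm r uone
      _ = ‖uone‖ * ‖u‖ := by rw [hrdef, norm_abs_eq_norm, mul_comm]
    rw [abs_le]
    constructor <;> nlinarith [e1.1, e1.2, e2.1, e2.2, e3.2]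
  have hcompact : IsCompact S := by
    apply WeakDual.isCompact_of_bounded_of_closed _ hclosed
    have hsub : (StrongDual.toWeakDual ⁻¹' S : Set (StrongDual ℝ (Lp ℝ 2 ν))) ⊆
        Metric.closedBall 0 ‖uone‖ := by
      intro x hx
      rw [Metric.mem_closedBall, dist_zero_right]
      refine ContinuousLinearMap.opNorm_le_bound x (norm_nonneg uone) fun u => ?_
      have := hbound _ hx u
      rw [Real.norm_eq_abs]
      exact this
    exact Bornology.IsBounded.subset (Metric.isBounded_closedBall) hsub
  -- extreme point
  haveI : LocallyConvexSpace ℝ (WeakDual ℝ (Lp ℝ 2 ν)) :=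
    inferInstanceAs (LocallyConvexSpace ℝ (WeakBilin (topDualPairing ℝ (Lp ℝ 2 ν))))
  obtain ⟨Λ, hΛmem⟩ := hcompact.extremePoints_nonempty ⟨_, hΛ₀S⟩
  rw [mem_extremePoints] at hΛmem
  obtain ⟨hΛS, hext⟩ := hΛmem
  -- Riesz representation
  obtain ⟨h, hh⟩ : ∃ h : Lp ℝ 2 ν, ∀ u, Λ u = ⟪h, u⟫ := by
    obtain ⟨h, hh⟩ := (InnerProductSpace.toDual ℝ (Lp ℝ 2 ν)).surjective (WeakDual.toStrongDual Λ)
    exact ⟨h, fun u => by rw [← InnerProductSpace.toDual_apply_apply, hh]; rfl⟩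
  have hhm : Measurable (⇑h) := (Lp.stronglyMeasurable h).measurable
  -- evaluation on indicators
  have hind_eval : ∀ E : Set A, (hE : MeasurableSet E) →
      Λ ((hindmem E hE).toLp _) = ∫ a in E, h a ∂ν := by
    intro E hE
    rw [hh, hinner]
    rw [← integral_indicator hE]
    refine integral_congr_ae ?_
    filter_upwards [MemLp.coeFn_toLp (hindmem E hE)] with a ha
    rw [ha]
    by_cases hmem : a ∈ E <;> simp [Set.indicator, hmem]
  have hq_nonneg : ∀ E : Set A, (hE : MeasurableSet E) →
      0 ≤ᵐ[ν] ⇑((hindmem E hE).toLp _) := by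
    intro E hE
    filter_upwards [MemLp.coeFn_toLp (hindmem E hE)] with a ha
    rw [Pi.zero_apply, ha]
    exact Set.indicator_nonneg (by intros; norm_num) a
  have hq_int : ∀ E : Set A, (hE : MeasurableSet E) →
      ∫ a, ((hindmem E hE).toLp _) a ∂ν = (ν E).toReal := by
    intro E hE
    rw [integral_congr_ae (MemLp.coeFn_toLp (hindmem E hE)), integral_indicator_const _ hE]
    simp [measureReal_def]
  -- 0 ≤ h ≤ 1 a.e.
  have h0 : 0 ≤ᵐ[ν] ⇑h := by
    refine ae_nonneg_of_forall_setIntegral_nonneg (hint h) fun E hE _ => ?_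
    rw [← hind_eval E hE]
    exact (hΛS.1 _ (hq_nonneg E hE)).1
  have h1 : ∀ᵐ a ∂ν, h a ≤ 1 := by
    have : 0 ≤ᵐ[ν] fun a => 1 - h a := by
      refine ae_nonneg_of_forall_setIntegral_nonneg ((integrable_const 1).sub (hint h))
        fun E hE _ => ?_
      have hup := (hΛS.1 _ (hq_nonneg E hE)).2
      rw [hind_eval E hE, hq_int E hE] at hup
      rw [integral_sub (integrable_const 1).integrableOn (hint h).integrableOn]
      simp only [integral_const, measureReal_def, Measure.restrict_apply_univ, smul_eq_mul, mul_one]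
      linarith
    filter_upwards [this] with a ha
    simp only [Pi.zero_apply] at ha
    linarith
  -- the "intermediate level" sets are null
  have hCnull : ∀ n : ℕ, ν {a | 1/(n+1:ℝ) ≤ h a ∧ h a ≤ 1 - 1/(n+1:ℝ)} = 0 := by
    intro n
    by_contra hC0
    set ε : ℝ := 1/(n+1:ℝ) with hεdef
    have hε : 0 < ε := by positivity
    set C : Set A := {a | ε ≤ h a ∧ h a ≤ 1 - ε} with hCdef
    have hCm : MeasurableSet C := by
      rw [hCdef, Set.setOf_and]
      exact (measurableSet_le measurable_const hhm).inter (measurableSet_le hhm measurable_const)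
    have hCpos : 0 < ν C := pos_iff_ne_zero.2 hC0
    obtain ⟨E, hE, hdisj⟩ := exists_disjoint_pos ν hna (d+1) C hCm hCpos
    have hEm : ∀ j, MeasurableSet (E j) := fun j => (hE j).1
    have hEC : ∀ j, E j ⊆ C := fun j => (hE j).2.1
    have hEpos : ∀ j, 0 < ν (E j) := fun j => (hE j).2.2
    set v : Fin (d+1) → Fin d → ℝ := fun j i => ∫ a in E j, ψ a i ∂ν with hvdef
    obtain ⟨α, ⟨jx, hjx⟩, hαsum⟩ := exists_null_comb d v
    obtain ⟨j₀, -, hj₀⟩ := Finset.exists_max_image Finset.univ (fun j => |α j|)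
      ⟨jx, Finset.mem_univ jx⟩
    have hm0 : 0 < |α j₀| := lt_of_lt_of_le (abs_pos.2 hjx) (hj₀ jx (Finset.mem_univ jx))
    set c : ℝ := ε / |α j₀| with hcdef
    have hc : 0 < c := div_pos hε hm0
    set β : Fin (d+1) → ℝ := fun j => c * α j with hβdef
    have hβb : ∀ j, |β j| ≤ ε := by
      intro j
      rw [hβdef]
      simp only
      rw [abs_mul, abs_of_pos hc, hcdef, div_mul_eq_mul_div, div_le_iff₀ hm0]
      calc ε * |α j| ≤ ε * |α j₀| := by
            exact mul_le_mul_of_nonneg_left (hj₀ j (Finset.mem_univ j)) hε.le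
      _ = ε * |α j₀| := rfl
    have hβ₀ : β j₀ ≠ 0 := mul_ne_zero hc.ne' (abs_pos.1 hm0)
    set g : A → ℝ := fun a => ∑ j, (E j).indicator (fun _ => β j) a with hgdef
    have hgm : Measurable g :=
      Finset.measurable_sum _ fun j _ => measurable_const.indicator (hEm j)
    have hnotmem : ∀ j k : Fin (d+1), k ≠ j → ∀ a, a ∈ E j → a ∉ E k := fun j k hjk a haj hak =>
      Set.disjoint_left.1 (hdisj hjk) hak haj
    have hgj : ∀ j, ∀ a ∈ E j, g a = β j := by
      intro j a ha
      rw [hgdef]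
      simp only
      rw [Finset.sum_eq_single j]
      · rw [Set.indicator_of_mem ha]
      · exact fun k _ hkj => Set.indicator_of_notMem (hnotmem j k hkj a ha) _
      · exact fun hj => absurd (Finset.mem_univ j) hj
    have hg0 : ∀ a, a ∉ C → g a = 0 := by
      intro a ha
      rw [hgdef]
      exact Finset.sum_eq_zero fun j _ => Set.indicator_of_notMem (fun hm' => ha (hEC j hm')) _
    have hgb : ∀ a, |g a| ≤ ε := by
      intro a
      by_cases hc' : ∃ j, a ∈ E j
      · obtain ⟨j, hj⟩ := hc'
        rw [hgj j a hj]; exact hβb j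
      · push_neg at hc'
        have hz : g a = 0 := Finset.sum_eq_zero fun j _ => Set.indicator_of_notMem (hc' j) _
        rw [hz, abs_zero]; exact hε.le
    have hgψ : ∀ i, ∫ a, g a * ψ a i ∂ν = 0 := by
      intro i
      have hrw : (fun a => g a * ψ a i) =
          fun a => ∑ j, (E j).indicator (fun x => β j * ψ x i) a := by
        funext a
        rw [hgdef]
        simp only
        rw [Finset.sum_mul]
        refine Finset.sum_congr rfl fun j _ => ?_
        by_cases hm' : a ∈ E j <;> simp [Set.indicator, hm']
      rw [hrw, integral_finset_sum _ (fun j _ =>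
        ((hψiint i).const_mul (β j)).indicator (hEm j))]
      have hterm : ∀ j : Fin (d+1), ∫ a, (E j).indicator (fun x => β j * ψ x i) a ∂ν
          = β j * v j i := by
        intro j
        rw [integral_indicator (hEm j), integral_const_mul]
      rw [Finset.sum_congr rfl fun j _ => hterm j]
      have hci := congrFun hαsum i
      simp only [Finset.sum_apply, Pi.smul_apply, smul_eq_mul, Pi.zero_apply] at hci
      calc ∑ j, β j * v j i = c * ∑ j, α j * v j i := by
            rw [Finset.mul_sum]
            exact Finset.sum_congr rfl fun j _ => by rw [hβdef]; ring
      _ = 0 := by rw [hci, mul_zero]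
    have hgmem : MemLp g 2 ν := hmem2 g hgm ε hgb
    set G : Lp ℝ 2 ν := hgmem.toLp _ with hGdef
    have hGcoe : ⇑G =ᵐ[ν] g := MemLp.coeFn_toLp _
    set T : WeakDual ℝ (Lp ℝ 2 ν) :=
      StrongDual.toWeakDual (InnerProductSpace.toDual ℝ (Lp ℝ 2 ν) G) with hTdef
    have hTval : ∀ u : Lp ℝ 2 ν, T u = ∫ a, g a * u a ∂ν := by
      intro u
      show (InnerProductSpace.toDual ℝ (Lp ℝ 2 ν) G) u = _
      rw [InnerProductSpace.toDual_apply_apply, hinner]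
      refine integral_congr_ae ?_
      filter_upwards [hGcoe] with a ha
      rw [ha]
    have hgu_int : ∀ u : Lp ℝ 2 ν, Integrable (fun a => g a * u a) ν := by
      intro u
      refine (hmul G u).congr ?_
      filter_upwards [hGcoe] with a ha
      rw [ha]
    have hmain : ∀ σ : ℝ, σ = 1 ∨ σ = -1 → Λ + σ • T ∈ S := by
      intro σ hσ
      have hσb : |σ| = 1 := by rcases hσ with h' | h' <;> rw [h'] <;> norm_num
      have hbd : ∀ᵐ a ∂ν, 0 ≤ h a + σ * g a ∧ h a + σ * g a ≤ 1 := by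
        filter_upwards [h0, h1] with a ha0 ha1
        simp only [Pi.zero_apply] at ha0
        by_cases hac : a ∈ C
        · have h1' : ε ≤ h a := hac.1
          have h2' : h a ≤ 1 - ε := hac.2
          have h3' : |σ * g a| ≤ ε := by
            rw [abs_mul, hσb, one_mul]; exact hgb a
          have h4' := abs_le.1 h3'
          exact ⟨by linarith [h4'.1], by linarith [h4'.2]⟩
        · rw [hg0 a hac, mul_zero, add_zero]; exact ⟨ha0, ha1⟩
      have hint2 : ∀ u : Lp ℝ 2 ν, Integrable (fun a => (h a + σ * g a) * u a) ν := by
        intro u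
        have := (hmul h u).add (((hgu_int u)).const_mul σ)
        exact this.congr (Filter.Eventually.of_forall fun a => by simp only [Pi.add_apply]; ring)
      have hval : ∀ u : Lp ℝ 2 ν, (Λ + σ • T) u = ∫ a, (h a + σ * g a) * u a ∂ν := by
        intro u
        have h5' : (Λ + σ • T) u = Λ u + σ * T u := rfl
        have h6' : (fun a => (h a + σ * g a) * u a)
            = fun a => h a * u a + σ * (g a * u a) := funext fun a => by ring
        rw [h5', hh, hinner, hTval, h6',
          integral_add (hmul h u) ((hgu_int u).const_mul σ), integral_const_mul]
      constructor
      · intro u hu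
        rw [hval]
        constructor
        · refine integral_nonneg_of_ae ?_
          filter_upwards [hbd, hu] with a ha hu'
          simp only [Pi.zero_apply] at hu'
          exact mul_nonneg ha.1 hu'
        · refine integral_mono_ae (hint2 u) (hint u) ?_
          filter_upwards [hbd, hu] with a ha hu'
          simp only [Pi.zero_apply] at hu'
          calc (h a + σ * g a) * u a ≤ 1 * u a :=
                mul_le_mul_of_nonneg_right ha.2 hu'
          _ = u a := one_mul _
      · intro i
        have h7' : (Λ + σ • T) (Ψ i) = Λ (Ψ i) + σ * T (Ψ i) := rfl
        have h8' : T (Ψ i) = 0 := by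
          rw [hTval]
          rw [show ∫ a, g a * (Ψ i) a ∂ν = ∫ a, g a * ψ a i ∂ν from
            integral_congr_ae (by filter_upwards [hΨcoe i] with a ha; rw [ha])]
          exact hgψ i
        rw [h7', h8', mul_zero, add_zero]
        exact hΛS.2 i
    have hP := hmain 1 (Or.inl rfl)
    have hM := hmain (-1) (Or.inr rfl)
    have hseg : Λ ∈ openSegment ℝ (Λ + (1:ℝ) • T) (Λ + (-1:ℝ) • T) := by
      refine ⟨1/2, 1/2, by norm_num, by norm_num, by norm_num, ?_⟩
      module
    obtain ⟨hPe, -⟩ := hext _ hP _ hM hseg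
    have hT0 : T = 0 := by
      rw [one_smul] at hPe
      have := congrArg (fun x => x - Λ) hPe
      simpa using this
    have hTq : T ((hindmem (E j₀) (hEm j₀)).toLp _) = 0 := by rw [hT0]; rfl
    rw [hTval] at hTq
    have hcomp : ∫ a, g a * ((hindmem (E j₀) (hEm j₀)).toLp _) a ∂ν
        = β j₀ * (ν (E j₀)).toReal := by
      have h9' : ∫ a, g a * ((hindmem (E j₀) (hEm j₀)).toLp _) a ∂ν
          = ∫ a in E j₀, g a ∂ν := by
        rw [← integral_indicator (hEm j₀)]
        refine integral_congr_ae ?_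
        filter_upwards [MemLp.coeFn_toLp (hindmem (E j₀) (hEm j₀))] with a ha
        rw [ha]
        by_cases hm' : a ∈ E j₀ <;> simp [Set.indicator, hm']
      rw [h9', setIntegral_congr_fun (hEm j₀) (fun a ha => hgj j₀ a ha), setIntegral_const,
        smul_eq_mul, mul_comm, measureReal_def]
    rw [hcomp] at hTq
    rcases mul_eq_zero.1 hTq with h' | h'
    · exact hβ₀ h'
    · exact (ENNReal.toReal_pos (hEpos j₀).ne' (measure_ne_top ν _)).ne' h'
  -- h is a.e. {0,1}-valued
  have hae01 : ∀ᵐ a ∂ν, h a = 0 ∨ h a = 1 := by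
    have hN : ν (⋃ n : ℕ, {a | 1/(n+1:ℝ) ≤ h a ∧ h a ≤ 1 - 1/(n+1:ℝ)}) = 0 :=
      measure_iUnion_null fun n => hCnull n
    have hNae := measure_eq_zero_iff_ae_notMem.mp hN
    filter_upwards [h0, h1, hNae] with a ha0 ha1 haN
    simp only [Pi.zero_apply] at ha0
    by_contra hcon
    push_neg at hcon
    obtain ⟨hne0, hne1⟩ := hcon
    have hlt : 0 < h a := lt_of_le_of_ne ha0 (Ne.symm hne0)
    have hlt1 : (0:ℝ) < 1 - h a := by
      have := lt_of_le_of_ne ha1 hne1; linarith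
    obtain ⟨n, hn⟩ := exists_nat_one_div_lt (lt_min hlt hlt1)
    refine haN (Set.mem_iUnion.2 ⟨n, ?_⟩)
    constructor
    · exact le_of_lt (lt_of_lt_of_le hn (min_le_left _ _))
    · have := lt_of_lt_of_le hn (min_le_right _ _)
      linarith
  set B : Set A := {a | 1/2 < h a} with hBdef
  have hBm : MeasurableSet B := measurableSet_lt measurable_const hhm
  have hindB : ⇑h =ᵐ[ν] B.indicator (fun _ => (1:ℝ)) := by
    filter_upwards [hae01] with a ha
    rcases ha with ha | ha
    · have hnb : a ∉ B := by
        rw [hBdef]; simp only [Set.mem_setOf_eq, not_lt, ha]; norm_num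
      rw [ha, Set.indicator_of_notMem hnb]
    · have hb' : a ∈ B := by
        rw [hBdef]; simp only [Set.mem_setOf_eq, ha]; norm_num
      rw [ha, Set.indicator_of_mem hb']
  refine ⟨B, hBm, fun i => ?_⟩
  have hfin : ∫ a in B, ψ a i ∂ν = ∫ a, h a * ψ a i ∂ν := by
    rw [← integral_indicator hBm]
    refine integral_congr_ae ?_
    filter_upwards [hindB] with a ha
    by_cases hm' : a ∈ B
    · rw [Set.indicator_of_mem hm', ha, Set.indicator_of_mem hm', one_mul]
    · rw [Set.indicator_of_notMem hm', ha, Set.indicator_of_notMem hm', zero_mul]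
  have hΛΨ : Λ (Ψ i) = ∫ a, h a * ψ a i ∂ν := by
    rw [hh, hinner]
    refine integral_congr_ae ?_
    filter_upwards [hΨcoe i] with a ha
    rw [ha]
  rw [hfin, ← hΛΨ]
  exact hΛS.2 i


/-- Lyapunov-type theorem for integrable vector functions. -/
lemma lyapunov (μ : Measure A) [IsFiniteMeasure μ]
    (hna : ∀ C : Set A, MeasurableSet C → 0 < μ C →
      ∃ B ⊆ C, MeasurableSet B ∧ 0 < μ B ∧ μ B < μ C)
    (d : ℕ) (φ : A → Fin d → ℝ) (hφ : Integrable φ μ)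
    (s : ℝ) (hs0 : 0 ≤ s) (hs1 : s ≤ 1) :
    ∃ B, MeasurableSet B ∧ ∫ a in B, φ a ∂μ = s • ∫ a, φ a ∂μ := by
  -- replace φ by a measurable representative
  have hsm := hφ.1
  set φ' : A → Fin d → ℝ := hsm.mk φ with hφ'def
  have hφ'm : Measurable φ' := hsm.stronglyMeasurable_mk.measurable
  have hae : φ =ᵐ[μ] φ' := hsm.ae_eq_mk
  have hφ' : Integrable φ' μ := hφ.congr hae
  -- the density
  set w : A → ℝ≥0 := fun a => (1 + ‖φ' a‖).toNNReal with hwdef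
  have hwm : Measurable w := (measurable_const.add hφ'm.norm).real_toNNReal
  set ν : Measure A := μ.withDensity (fun a => (w a : ℝ≥0∞)) with hνdef
  have hwa : ∀ a, (1:ℝ≥0∞) ≤ (w a : ℝ≥0∞) := by
    intro a
    rw [ENNReal.one_le_coe_iff, hwdef, ← Real.toNNReal_one]
    exact Real.toNNReal_le_toNNReal (by linarith [norm_nonneg (φ' a)])
  have hac : ∀ {C : Set A}, MeasurableSet C → μ C ≤ ν C := by
    intro C hC
    rw [hνdef, withDensity_apply _ hC]
    calc μ C = ∫⁻ _ in C, 1 ∂μ := by simp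
    _ ≤ _ := setLIntegral_mono (hwm.coe_nnreal_ennreal) (fun a _ => hwa a)
  have hν_fin : IsFiniteMeasure ν := by
    constructor
    rw [hνdef, withDensity_apply _ MeasurableSet.univ, Measure.restrict_univ]
    have : ∀ a, (w a : ℝ≥0∞) ≤ 1 + ‖φ' a‖₊ := by
      intro a
      rw [← ENNReal.coe_one, ← ENNReal.coe_add, ENNReal.coe_le_coe, hwdef]
      refine Real.toNNReal_le_iff_le_coe.2 ?_
      push_cast
      simp [Real.coe_toNNReal, norm_nonneg]
    calc ∫⁻ a, (w a : ℝ≥0∞) ∂μ ≤ ∫⁻ a, (1 + ‖φ' a‖₊) ∂μ := lintegral_mono fun a => this a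
    _ = μ Set.univ + ∫⁻ a, ‖φ' a‖₊ ∂μ := by rw [lintegral_add_left measurable_const]; simp
    _ < ⊤ := ENNReal.add_lt_top.2 ⟨measure_lt_top _ _, hφ'.2⟩
  have hν_na : ∀ C : Set A, MeasurableSet C → 0 < ν C →
      ∃ B ⊆ C, MeasurableSet B ∧ 0 < ν B ∧ ν B < ν C := by
    intro C hC h0
    have hμC : 0 < μ C := by
      rcases eq_or_lt_of_le (zero_le : (0:ℝ≥0∞) ≤ μ C) with h | h
      · exfalso
        have : ν C = 0 := by
          have := withDensity_absolutelyContinuous μ (fun a => (w a : ℝ≥0∞))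
          exact this h.symm
        exact h0.ne' this
      · exact h
    obtain ⟨B, hBC, hBm, hB0, hBlt⟩ := hna C hC hμC
    refine ⟨B, hBC, hBm, lt_of_lt_of_le hB0 (hac hBm), ?_⟩
    have hdiff : 0 < μ (C \ B) := by
      rw [measure_diff hBC hBm.nullMeasurableSet (measure_ne_top μ B)]
      exact tsub_pos_of_lt hBlt
    have h2 : 0 < ν (C \ B) := lt_of_lt_of_le hdiff (hac (hC.diff hBm))
    have h3 := measure_inter_add_diff (μ := ν) C hBm
    rw [Set.inter_eq_self_of_subset_right hBC] at h3
    calc ν B < ν B + ν (C \ B) := ENNReal.lt_add_right (measure_ne_top ν B) h2.ne'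
    _ = ν C := h3
  set ψ : A → Fin d → ℝ := fun a => (1 + ‖φ' a‖)⁻¹ • φ' a with hψdef
  have hψm : Measurable ψ := ((measurable_const.add hφ'm.norm).inv).smul hφ'm
  have hψb : ∀ a, ‖ψ a‖ ≤ 1 := by
    intro a
    have h1 : (0:ℝ) < 1 + ‖φ' a‖ := by positivity
    rw [hψdef]
    simp only [norm_smul, Real.norm_eq_abs, abs_of_pos (inv_pos.2 h1)]
    rw [inv_mul_le_iff₀ h1]
    linarith
  haveI := hν_fin
  obtain ⟨B, hBm, hBi⟩ := lyapunov_bounded ν hν_na d ψ hψm hψb s hs0 hs1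
  have htrans : ∀ {C : Set A}, MeasurableSet C → ∫ a in C, ψ a ∂ν = ∫ a in C, φ a ∂μ := by
    intro C hC
    rw [hνdef, setIntegral_withDensity_eq_setIntegral_smul hwm ψ hC]
    refine setIntegral_congr_ae hC ?_
    filter_upwards [hae] with a ha _
    have h1 : (0:ℝ) < 1 + ‖φ' a‖ := by positivity
    rw [NNReal.smul_def, hwdef, Real.coe_toNNReal _ h1.le, hψdef, smul_smul,
      mul_inv_cancel₀ h1.ne', one_smul, ha]
  have hψtop : MemLp ψ ⊤ ν := memLp_top_of_bound hψm.aestronglyMeasurable 1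
    (Filter.Eventually.of_forall hψb)
  have hψint : Integrable ψ ν := memLp_one_iff_integrable.1 (hψtop.mono_exponent le_top)
  have hcoord : ∀ {ρ : Measure A} (g : A → Fin d → ℝ), Integrable g ρ → ∀ i : Fin d,
      (∫ a, g a ∂ρ) i = ∫ a, g a i ∂ρ := by
    intro ρ g hg i
    exact ((ContinuousLinearMap.proj (R := ℝ) (φ := fun _ : Fin d => ℝ) i).integral_comp_comm
      hg).symm
  refine ⟨B, hBm, ?_⟩
  have hu : ∫ a, ψ a ∂ν = ∫ a, φ a ∂μ := by
    simpa [Measure.restrict_univ] using htrans MeasurableSet.univ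
  rw [← htrans hBm, ← hu]
  funext i
  rw [hcoord ψ hψint.integrableOn i, Pi.smul_apply, hcoord ψ hψint i, smul_eq_mul]
  exact hBi i


end RichterProof

open RichterProof in
/-- Richter's theorem: the Aumann integral of a correspondence
`F : A → 2^(ℝ^d)` over a non-atomic finite measure space is convex. -/
theorem richter_aumann_integral_convex
    {A : Type*} [MeasurableSpace A] (μ : Measure A) [IsFiniteMeasure μ]
    (hna : ∀ C : Set A, MeasurableSet C → 0 < μ C →
      ∃ B ⊆ C, MeasurableSet B ∧ 0 < μ B ∧ μ B < μ C)
    (d : ℕ) (F : A → Set (Fin d → ℝ)) :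
    Convex ℝ {x : Fin d → ℝ | ∃ f : A → (Fin d → ℝ),
      Integrable f μ ∧ (∀ᵐ a ∂μ, f a ∈ F a) ∧ ∫ a, f a ∂μ = x} := by
  classical
  rintro x ⟨f, hf, hfF, rfl⟩ y ⟨g, hg, hgF, rfl⟩ p q hp hq hpq
  obtain ⟨B, hBm, hB⟩ := RichterProof.lyapunov μ hna d (f - g) (hf.sub hg) p hp
    (by linarith)
  refine ⟨B.piecewise f g, ?_, ?_, ?_⟩
  · exact Integrable.piecewise hBm hf.integrableOn hg.integrableOn
  · filter_upwards [hfF, hgF] with a haf hag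
    by_cases h : a ∈ B
    · rwa [Set.piecewise_eq_of_mem _ _ _ h]
    · rwa [Set.piecewise_eq_of_notMem _ _ _ h]
  · have h1 : ∫ a, B.piecewise f g a ∂μ = ∫ a in B, f a ∂μ + ∫ a in Bᶜ, g a ∂μ := by
      rw [← integral_add_compl hBm (Integrable.piecewise hBm hf.integrableOn hg.integrableOn)]
      congr 1
      · exact setIntegral_congr_fun hBm fun a ha => Set.piecewise_eq_of_mem _ _ _ ha
      · exact setIntegral_congr_fun hBm.compl fun a ha => Set.piecewise_eq_of_notMem _ _ _ ha
    have h2 : ∫ a in B, (f - g) a ∂μ = ∫ a in B, f a ∂μ - ∫ a in B, g a ∂μ := by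
      simp only [Pi.sub_apply]
      exact integral_sub hf.integrableOn hg.integrableOn
    have h3 : ∫ a in B, g a ∂μ + ∫ a in Bᶜ, g a ∂μ = ∫ a, g a ∂μ :=
      integral_add_compl hBm hg
    have h4 : ∫ a, (f - g) a ∂μ = ∫ a, f a ∂μ - ∫ a, g a ∂μ := by
      simp only [Pi.sub_apply]
      exact integral_sub hf hg
    rw [h1]
    rw [h2, h4] at hB
    have hq' : q = 1 - p := by linarith
    have : ∫ a in B, f a ∂μ = p • (∫ a, f a ∂μ - ∫ a, g a ∂μ) + ∫ a in B, g a ∂μ := by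
      rw [← hB]; abel
    rw [this, hq']
    have h5 : ∫ a in Bᶜ, g a ∂μ = ∫ a, g a ∂μ - ∫ a in B, g a ∂μ := by
      rw [← h3]; abel
    rw [h5]
    simp only [smul_sub, sub_smul, one_smul]
    abel
end
end

section
/- Dilatation monotonicity under a common prior is preserved under infimal convolution: if each of finitely many risk measures ρ_1, …, ρ_n on L^∞(P) satisfies ρ_i(E^Q[X | G]) ≤ ρ_i(X) for every X and every sub-σ-algebra G (for a fixed Q ∼ P), and the infimal convolution (□_i ρ_i)(X) = inf { Σ ρ_i(X_i) : Σ X_i = X } is finite everywhere, then □_i ρ_i is also Q-dilatation monotone. -/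
open MeasureTheory
noncomputable section

private lemma lp_coeFn_sum {α E : Type*} [NormedAddCommGroup E] {m : MeasurableSpace α}
    {μ : Measure α} {p : ENNReal} {ι : Type*} (s : Finset ι) (f : ι → Lp E p μ) :
    ((∑ i ∈ s, f i : Lp E p μ) : α → E) =ᵐ[μ] fun ω => ∑ i ∈ s, f i ω := by
  classical
  induction s using Finset.induction_on with
  | empty => simp only [Finset.sum_empty]; exact Lp.coeFn_zero E p μ
  | @insert a s hi ih =>
    rw [Finset.sum_insert hi]
    filter_upwards [Lp.coeFn_add (f a) (∑ j ∈ s, f j), ih] with ω h1 h2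
    rw [h1, Pi.add_apply, h2, Finset.sum_insert hi]

/-- dilatation monotonicity under a common prior `Q ∼ P` is preserved by
the (finite) infimal convolution, provided the latter is finite everywhere. -/
theorem infConv_dilatation_monotone
    {Ω : Type*} {mΩ : MeasurableSpace Ω} (P Q : Measure Ω)
    [IsProbabilityMeasure P] [IsProbabilityMeasure Q] (hQP : Q ≪ P) (hPQ : P ≪ Q)
    (n : ℕ) (ρ : Fin n → Lp ℝ ⊤ P → ℝ)
    (hmono : ∀ i, ∀ X Y : Lp ℝ ⊤ P, X ≤ Y → ρ i X ≤ ρ i Y)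
    (hcash : ∀ i, ∀ (X : Lp ℝ ⊤ P) (c : ℝ), ρ i (X + Lp.const ⊤ P c) = ρ i X + c)
    (hdil : ∀ i, ∀ (G : MeasurableSpace Ω), G ≤ mΩ → ∀ X Z : Lp ℝ ⊤ P,
      (Z : Ω → ℝ) =ᵐ[Q] Q[(X : Ω → ℝ)|G] → ρ i Z ≤ ρ i X)
    (icSet : Lp ℝ ⊤ P → Set ℝ)
    (hicSet : ∀ X, icSet X =
      {r : ℝ | ∃ f : Fin n → Lp ℝ ⊤ P, (∑ i, f i) = X ∧ r = ∑ i, ρ i (f i)})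
    (hfin : ∀ X : Lp ℝ ⊤ P, (icSet X).Nonempty ∧ BddBelow (icSet X)) :
    ∀ (G : MeasurableSpace Ω), G ≤ mΩ → ∀ X Z : Lp ℝ ⊤ P,
      (Z : Ω → ℝ) =ᵐ[Q] Q[(X : Ω → ℝ)|G] → sInf (icSet Z) ≤ sInf (icSet X) := by
  intro G hG X Z hZ
  refine le_csInf (hfin X).1 (fun r hr => ?_)
  rw [hicSet] at hr
  obtain ⟨f, hsum, hrval⟩ := hr
  -- a.e. bound for each component
  have hbP : ∀ i, ∀ᵐ ω ∂P, ‖(f i : Ω → ℝ) ω‖ ≤ (eLpNorm (f i : Ω → ℝ) ⊤ P).toReal := by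
    intro i
    have h1 := enorm_ae_le_eLpNormEssSup (f i : Ω → ℝ) P
    have hlt : eLpNormEssSup (f i : Ω → ℝ) P < ⊤ := by
      rw [← eLpNorm_exponent_top]; exact Lp.eLpNorm_lt_top (f i)
    filter_upwards [h1] with ω hω
    rw [eLpNorm_exponent_top]
    have := ENNReal.toReal_mono hlt.ne hω
    simpa using this
  have hbQ : ∀ i, ∀ᵐ ω ∂Q, ‖(f i : Ω → ℝ) ω‖ ≤ (eLpNorm (f i : Ω → ℝ) ⊤ P).toReal :=
    fun i => (hbP i).filter_mono hQP.ae_le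
  -- each component is integrable under Q
  have hint : ∀ i, Integrable (f i : Ω → ℝ) Q := by
    intro i
    have hmeas : AEStronglyMeasurable (m := mΩ) (f i : Ω → ℝ) Q :=
      (Lp.memLp (f i)).aestronglyMeasurable.mono_ac hQP
    exact (memLp_top_of_bound hmeas _ (hbQ i)).integrable le_top
  -- bound on conditional expectation under Q
  have hceQ : ∀ i, ∀ᵐ ω ∂Q,
      ‖(Q[(f i : Ω → ℝ)|G]) ω‖ ≤ (eLpNorm (f i : Ω → ℝ) ⊤ P).toReal := by
    intro i
    set C := (eLpNorm (f i : Ω → ℝ) ⊤ P).toReal with hC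
    have hupper : (f i : Ω → ℝ) ≤ᵐ[Q] fun _ => C := by
      filter_upwards [hbQ i] with ω hω; exact (le_abs_self _).trans (by simpa [hC] using hω)
    have hlower : (fun _ : Ω => -C) ≤ᵐ[Q] (f i : Ω → ℝ) := by
      filter_upwards [hbQ i] with ω hω
      exact neg_le_of_abs_le (by simpa [hC] using hω)
    have h1 := condExp_mono (μ := Q) (m := G) (hint i) (integrable_const C) hupper
    have h2 := condExp_mono (μ := Q) (m := G) (integrable_const (-C)) (hint i) hlower
    rw [condExp_const hG] at h1
    rw [condExp_const hG] at h2
    filter_upwards [h1, h2] with ω hω1 hω2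
    rw [Real.norm_eq_abs, abs_le]
    exact ⟨hω2, hω1⟩
  have hceP : ∀ i, ∀ᵐ ω ∂P,
      ‖(Q[(f i : Ω → ℝ)|G]) ω‖ ≤ (eLpNorm (f i : Ω → ℝ) ⊤ P).toReal :=
    fun i => (hceQ i).filter_mono hPQ.ae_le
  have hmem : ∀ i, MemLp (Q[(f i : Ω → ℝ)|G]) ⊤ P := by
    intro i
    exact memLp_top_of_bound
      ((stronglyMeasurable_condExp.mono hG).aestronglyMeasurable) _ (hceP i)
  -- the new allocation
  set g : Fin n → Lp ℝ ⊤ P := fun i => (hmem i).toLp _ with hg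
  have hgP : ∀ i, (g i : Ω → ℝ) =ᵐ[P] Q[(f i : Ω → ℝ)|G] := fun i => (hmem i).coeFn_toLp
  have hgQ : ∀ i, (g i : Ω → ℝ) =ᵐ[Q] Q[(f i : Ω → ℝ)|G] :=
    fun i => (hgP i).filter_mono hQP.ae_le
  -- g sums to Z
  have hXf : (X : Ω → ℝ) =ᵐ[Q] fun ω => ∑ i, (f i : Ω → ℝ) ω := by
    rw [← hsum]
    exact (lp_coeFn_sum Finset.univ f).filter_mono hQP.ae_le
  have hsumQ : ((∑ i, g i : Lp ℝ ⊤ P) : Ω → ℝ) =ᵐ[Q] (Z : Ω → ℝ) := by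
    have h1 : ((∑ i, g i : Lp ℝ ⊤ P) : Ω → ℝ) =ᵐ[Q] fun ω => ∑ i, (g i : Ω → ℝ) ω :=
      (lp_coeFn_sum Finset.univ g).filter_mono hQP.ae_le
    have h2 : ∀ᵐ ω ∂Q, ∑ i, (g i : Ω → ℝ) ω = ∑ i, (Q[(f i : Ω → ℝ)|G]) ω := by
      have := ae_all_iff.2 hgQ
      filter_upwards [this] with ω hω
      exact Finset.sum_congr rfl fun i _ => hω i
    have hfs : (fun ω => ∑ i, (f i : Ω → ℝ) ω) = ∑ i, (f i : Ω → ℝ) := by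
      ext ω; simp
    have h3 : (Q[fun ω => ∑ i, (f i : Ω → ℝ) ω|G]) =ᵐ[Q] ∑ i, Q[(f i : Ω → ℝ)|G] := by
      rw [hfs]; exact condExp_finset_sum (fun i _ => hint i) G
    have h4 : (Q[(X : Ω → ℝ)|G]) =ᵐ[Q] (Q[fun ω => ∑ i, (f i : Ω → ℝ) ω|G]) :=
      condExp_congr_ae hXf
    calc ((∑ i, g i : Lp ℝ ⊤ P) : Ω → ℝ)
        =ᵐ[Q] fun ω => ∑ i, (Q[(f i : Ω → ℝ)|G]) ω := h1.trans h2
      _ =ᵐ[Q] (Q[fun ω => ∑ i, (f i : Ω → ℝ) ω|G]) := by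
          refine Filter.EventuallyEq.symm (h3.trans ?_)
          filter_upwards with ω
          simp
      _ =ᵐ[Q] (Q[(X : Ω → ℝ)|G]) := h4.symm
      _ =ᵐ[Q] (Z : Ω → ℝ) := hZ.symm
  have hsumg : (∑ i, g i) = Z := Lp.ext (hsumQ.filter_mono hPQ.ae_le)
  -- ρ i (g i) ≤ ρ i (f i)
  have hle : ∀ i, ρ i (g i) ≤ ρ i (f i) := fun i => hdil i G hG (f i) (g i) (hgQ i)
  have hmemZ : (∑ i, ρ i (g i)) ∈ icSet Z := by
    rw [hicSet]; exact ⟨g, hsumg, rfl⟩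
  calc sInf (icSet Z) ≤ ∑ i, ρ i (g i) := csInf_le (hfin Z).2 hmemZ
    _ ≤ ∑ i, ρ i (f i) := Finset.sum_le_sum fun i _ => hle i
    _ = r := hrval.symm
end
end
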